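/- Let d_1 ≥ d_2 ≥ ... ≥ d_n > 0 be positive reals and define D_i(α) = Σ_{j=1}^i d_j^α. Then for every index i and all real numbers 0 ≤ α₁ ≤ α₂, we have D_i(α₁)/D_n(α₁) ≤ D_i(α₂)/D_n(α₂); that is, the function α ↦ D_i(α)/D_n(α) is monotone increasing on [0,∞). -/

import Mathlib

/-- Monotonicity in `α` of the normalized partial sums `D_i(α)/D_n(α)` for
decreasingly sorted positive reals `d_1 ≥ ⋯ ≥ d_n > 0`. -/
theorem stmt0 (n : ℕ) (hn : 0 < n) (d : ℕ → ℝ)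
    (hpos : ∀ j, j < n → 0 < d j)
    (hsorted : ∀ j k, j ≤ k → k < n → d k ≤ d j)
    (i : ℕ) (hi : i ≤ n) (α₁ α₂ : ℝ) (hα₁ : 0 ≤ α₁) (h : α₁ ≤ α₂) :
    (∑ j ∈ Finset.range i, d j ^ α₁) / (∑ j ∈ Finset.range n, d j ^ α₁)
      ≤ (∑ j ∈ Finset.range i, d j ^ α₂) / (∑ j ∈ Finset.range n, d j ^ α₂) := by
  have hpos1 : 0 < ∑ j ∈ Finset.range n, d j ^ α₁ :=
    Finset.sum_pos (fun j hj => Real.rpow_pos_of_pos (hpos j (Finset.mem_range.mp hj)) _)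
      (Finset.nonempty_range_iff.mpr hn.ne')
  have hpos2 : 0 < ∑ j ∈ Finset.range n, d j ^ α₂ :=
    Finset.sum_pos (fun j hj => Real.rpow_pos_of_pos (hpos j (Finset.mem_range.mp hj)) _)
      (Finset.nonempty_range_iff.mpr hn.ne')
  rw [div_le_div_iff₀ hpos1 hpos2]
  have hsplit : ∀ α : ℝ, (∑ j ∈ Finset.range n, d j ^ α)
      = (∑ j ∈ Finset.range i, d j ^ α) + ∑ j ∈ Finset.Ico i n, d j ^ α := by
    intro α
    rw [Finset.range_eq_Ico, Finset.range_eq_Ico,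
      Finset.sum_Ico_consecutive _ (Nat.zero_le i) hi]
  rw [hsplit α₁, hsplit α₂, mul_add, mul_add]
  have key : (∑ j ∈ Finset.range i, d j ^ α₁) * (∑ j ∈ Finset.Ico i n, d j ^ α₂)
      ≤ (∑ j ∈ Finset.range i, d j ^ α₂) * (∑ j ∈ Finset.Ico i n, d j ^ α₁) := by
    rw [Finset.sum_mul_sum, Finset.sum_mul_sum]
    apply Finset.sum_le_sum
    intro j hj
    apply Finset.sum_le_sum
    intro k hk
    have hj' : j < n := lt_of_lt_of_le (Finset.mem_range.mp hj) hi
    have hk' := Finset.mem_Ico.mp hk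
    have hjk : j ≤ k := le_of_lt (lt_of_lt_of_le (Finset.mem_range.mp hj) hk'.1)
    have hdk : 0 < d k := hpos k hk'.2
    have hdj : 0 < d j := hpos j hj'
    have hle : d k ≤ d j := hsorted j k hjk hk'.2
    have h1 : d j ^ α₁ * d k ^ α₂ = (d j ^ α₁ * d k ^ α₁) * d k ^ (α₂ - α₁) := by
      rw [mul_assoc, ← Real.rpow_add hdk]; ring_nf
    have h2 : d j ^ α₂ * d k ^ α₁ = (d j ^ α₁ * d k ^ α₁) * d j ^ (α₂ - α₁) := by
      rw [mul_right_comm, ← Real.rpow_add hdj]; ring_nf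
    rw [h1, h2]
    apply mul_le_mul_of_nonneg_left
    · exact Real.rpow_le_rpow hdk.le hle (sub_nonneg.mpr h)
    · positivity
  nlinarith [Finset.sum_nonneg (fun j (_ : j ∈ Finset.range i) =>
      (Real.rpow_pos_of_pos (hpos j (lt_of_lt_of_le (Finset.mem_range.mp ‹_›) hi)) α₁).le),
    Finset.sum_nonneg (fun j (_ : j ∈ Finset.range i) =>
      (Real.rpow_pos_of_pos (hpos j (lt_of_lt_of_le (Finset.mem_range.mp ‹_›) hi)) α₂).le)]
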